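/- Correctness of bad-vertex removal: let S ⊆ V and suppose X ⊆ S induces a non-trivial strongly connected subgraph such that for every j, L_j ∩ X = ∅ or U_j ∩ X ≠ ∅ (a good component). Then X contains no bad vertex of S, where a vertex v ∈ S is bad if there exists j with v ∈ L_j and U_j ∩ SCC_S(v) = ∅, where SCC_S(v) is the SCC of v in G[S]. Hence removing bad vertices from S preserves all good components contained in G[S]. -/

import Mathlib

/-- The restriction of the edge relation `E` to the vertex set `Z`. -/
def restrict {V : Type*} (E : V → V → Prop) (Z : Set V) : V → V → Prop :=
  fun u v => u ∈ Z ∧ v ∈ Z ∧ E u v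

/-- `x` and `y` are strongly connected (mutually reachable) w.r.t. edges `E`. -/
def SConn {V : Type*} (E : V → V → Prop) (x y : V) : Prop :=
  Relation.ReflTransGen E x y ∧ Relation.ReflTransGen E y x

/-- if `X ⊆ S` induces a non-trivial strongly connected subgraph that is
a good component (for every Streett pair `j`, `L j ∩ X = ∅` or `U j ∩ X ≠ ∅`), then no
vertex of `X` is bad w.r.t. `S`, where `v ∈ S` is bad if for some `j`, `v ∈ L j` and no
vertex of `U j` is strongly connected to `v` within `G[S]`. Hence removing bad vertices
from `S` preserves all good components contained in `G[S]`. -/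
theorem stmt17 {V : Type*} [Fintype V] (E : V → V → Prop) (k : ℕ)
    (L U : Fin k → Set V) (S X : Set V) (hXS : X ⊆ S)
    (hconn : ∀ x ∈ X, ∀ y ∈ X, Relation.ReflTransGen (restrict E X) x y)
    (hnontriv : ∃ x ∈ X, ∃ y ∈ X, E x y)
    (hgood : ∀ j, L j ∩ X = ∅ ∨ (U j ∩ X).Nonempty) :
    ∀ v ∈ X, ¬ ∃ j, v ∈ L j ∧ ∀ u ∈ U j, ¬ SConn (restrict E S) v u := by
  intro v hv ⟨j, hvL, hbad⟩
  have hmono : ∀ {a b}, Relation.ReflTransGen (restrict E X) a b →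
      Relation.ReflTransGen (restrict E S) a b := fun h =>
    Relation.ReflTransGen.mono (p := restrict E S) (fun a b ⟨ha, hb, he⟩ => ⟨hXS ha, hXS hb, he⟩) _ _ h
  rcases hgood j with h | ⟨u, huU, huX⟩
  · exact Set.eq_empty_iff_forall_notMem.mp h v ⟨hvL, hv⟩
  · exact hbad u huU ⟨hmono (hconn v hv u huX), hmono (hconn u huX v hv)⟩
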